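/- If Q is a nonnegative radially decreasing function on ℝᵈ, then 𝒞ₙ(Q) is radially decreasing for every n ≥ 1, and in particular 𝒯(𝒞ₙ(Q)) = 𝒞ₙ(Q) where 𝒯(g)(x) = g(−x). -/

import Mathlib

open MeasureTheory Real Set

noncomputable def conv {d : ℕ} (f g : EuclideanSpace ℝ (Fin d) → ℝ) :
    EuclideanSpace ℝ (Fin d) → ℝ :=
  fun x => ∫ y, f y * g (x - y)

/-- `Cconv f n` is the `n`-fold convolution power `𝒞ₙ(f)` for `n ≥ 1`. -/
noncomputable def Cconv {d : ℕ} (f : EuclideanSpace ℝ (Fin d) → ℝ) :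
    ℕ → EuclideanSpace ℝ (Fin d) → ℝ
  | 0 => f
  | 1 => f
  | (n + 2) => conv f (Cconv f (n + 1))

section Aux

variable {d : ℕ}

/-- Radially decreasing. -/
def RadDec (f : EuclideanSpace ℝ (Fin d) → ℝ) : Prop :=
  ∀ x y : EuclideanSpace ℝ (Fin d), ‖x‖ ≤ ‖y‖ → f y ≤ f x

lemma RadDec.congr {f : EuclideanSpace ℝ (Fin d) → ℝ} (hf : RadDec f)
    {a b : EuclideanSpace ℝ (Fin d)} (h : ‖a‖ = ‖b‖) : f a = f b :=
  le_antisymm (hf b a h.ge) (hf a b h.le)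

lemma RadDec.bdd {f : EuclideanSpace ℝ (Fin d) → ℝ} (hf : RadDec f)
    (x : EuclideanSpace ℝ (Fin d)) : f x ≤ f 0 :=
  hf 0 x (by simp)

lemma RadDec.measurable (hd : 1 ≤ d) {f : EuclideanSpace ℝ (Fin d) → ℝ}
    (hf : RadDec f) : Measurable f := by
  set e : EuclideanSpace ℝ (Fin d) := EuclideanSpace.single ⟨0, hd⟩ (1 : ℝ) with he
  have hne : ‖e‖ = 1 := by simp [he, EuclideanSpace.norm_single]
  have hkey : ∀ t : ℝ, 0 ≤ t → ‖t • e‖ = t := by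
    intro t ht
    rw [norm_smul, hne, mul_one, Real.norm_eq_abs, abs_of_nonneg ht]
  have hanti : Antitone (fun t : ℝ => f ((max t 0) • e)) := by
    intro t s hts
    exact hf _ _ (by
      rw [hkey _ (le_max_right t 0), hkey _ (le_max_right s 0)]
      exact max_le_max hts le_rfl)
  have heq : f = (fun t : ℝ => f ((max t 0) • e)) ∘ (fun x => ‖x‖) := by
    funext x
    simp only [Function.comp_apply, max_eq_left (norm_nonneg x)]
    exact hf.congr (by rw [hkey _ (norm_nonneg x)])
  rw [heq]
  exact hanti.measurable.comp measurable_norm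

lemma integrand_integrable {f g : EuclideanSpace ℝ (Fin d) → ℝ}
    (hf : Integrable f) (hgm : Measurable g) (hg0 : ∀ x, 0 ≤ g x) (hgr : RadDec g)
    (p : EuclideanSpace ℝ (Fin d)) :
    Integrable (fun u => f u * g (p - u)) := by
  have h : Integrable (fun u : EuclideanSpace ℝ (Fin d) => g (p - u) * f u) := by
    refine hf.bdd_mul (c := g 0) ?_ (Filter.Eventually.of_forall fun x => ?_)
    · exact ((hgm.comp (measurable_const.sub measurable_id)).aestronglyMeasurable)
    · rw [Real.norm_eq_abs, abs_of_nonneg (hg0 _)]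
      exact hgr.bdd _
  simpa [mul_comm] using h

lemma sign_lemma {f g : EuclideanSpace ℝ (Fin d) → ℝ}
    (hfr : RadDec f) (hgr : RadDec g) (v : EuclideanSpace ℝ (Fin d)) {a b : ℝ}
    (ha : 0 ≤ a) (hab : a ≤ b) (u : EuclideanSpace ℝ (Fin d)) :
    (f u - f (a • v + b • v - u)) * (g (b • v - u) - g (a • v - u)) ≤ 0 := by
  set A : ℝ := (a + b) * ‖v‖ ^ 2 - 2 * (inner ℝ v u : ℝ) with hA
  have h1 : ‖a • v + b • v - u‖ ^ 2 - ‖u‖ ^ 2 = (a + b) * A := by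
    have : a • v + b • v = (a + b) • v := by rw [add_smul]
    rw [this, norm_sub_sq_real, norm_smul, real_inner_smul_left]
    simp only [Real.norm_eq_abs, mul_pow, sq_abs, hA]
    ring
  have h2 : ‖b • v - u‖ ^ 2 - ‖a • v - u‖ ^ 2 = (b - a) * A := by
    rw [norm_sub_sq_real, norm_sub_sq_real, norm_smul, norm_smul,
      real_inner_smul_left, real_inner_smul_left]
    simp only [Real.norm_eq_abs, mul_pow, sq_abs, hA]
    ring
  have hab0 : 0 ≤ a + b := by linarith
  have hba0 : 0 ≤ b - a := by linarith
  rcases le_or_gt 0 A with hA0 | hA0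
  · -- ‖u‖ ≤ ‖a•v+b•v-u‖  and ‖a•v-u‖ ≤ ‖b•v-u‖
    have e1 : ‖u‖ ≤ ‖a • v + b • v - u‖ := by
      nlinarith [norm_nonneg u, norm_nonneg (a • v + b • v - u), mul_nonneg hab0 hA0]
    have e2 : ‖a • v - u‖ ≤ ‖b • v - u‖ := by
      nlinarith [norm_nonneg (a • v - u), norm_nonneg (b • v - u), mul_nonneg hba0 hA0]
    have F1 : 0 ≤ f u - f (a • v + b • v - u) := sub_nonneg.2 (hfr _ _ e1)
    have F2 : g (b • v - u) - g (a • v - u) ≤ 0 := sub_nonpos.2 (hgr _ _ e2)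
    exact mul_nonpos_of_nonneg_of_nonpos F1 F2
  · have hA0' : A ≤ 0 := hA0.le
    have e1 : ‖a • v + b • v - u‖ ≤ ‖u‖ := by
      nlinarith [norm_nonneg u, norm_nonneg (a • v + b • v - u),
        mul_nonpos_of_nonneg_of_nonpos hab0 hA0']
    have e2 : ‖b • v - u‖ ≤ ‖a • v - u‖ := by
      nlinarith [norm_nonneg (a • v - u), norm_nonneg (b • v - u),
        mul_nonpos_of_nonneg_of_nonpos hba0 hA0']
    have F1 : f u - f (a • v + b • v - u) ≤ 0 := sub_nonpos.2 (hfr _ _ e1)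
    have F2 : 0 ≤ g (b • v - u) - g (a • v - u) := sub_nonneg.2 (hgr _ _ e2)
    exact mul_nonpos_of_nonpos_of_nonneg F1 F2

lemma step_colinear {f g : EuclideanSpace ℝ (Fin d) → ℝ}
    (hf : Integrable f) (hfr : RadDec f)
    (hgm : Measurable g) (hg0 : ∀ x, 0 ≤ g x) (hgr : RadDec g)
    (v : EuclideanSpace ℝ (Fin d)) {a b : ℝ} (ha : 0 ≤ a) (hab : a ≤ b) :
    conv f g (b • v) ≤ conv f g (a • v) := by
  set p : EuclideanSpace ℝ (Fin d) := a • v with hp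
  set q : EuclideanSpace ℝ (Fin d) := b • v with hq
  set w : EuclideanSpace ℝ (Fin d) := p + q with hw
  have I1 : Integrable (fun u => f u * g (q - u)) := integrand_integrable hf hgm hg0 hgr q
  have I2 : Integrable (fun u => f u * g (p - u)) := integrand_integrable hf hgm hg0 hgr p
  set h1 : EuclideanSpace ℝ (Fin d) → ℝ := fun u => f u * (g (q - u) - g (p - u)) with hh1
  have Ih1 : Integrable h1 := by
    have := I1.sub I2
    apply this.congr
    filter_upwards with u
    simp [hh1]; ring
  have key1 : conv f g q - conv f g p = ∫ u, h1 u := by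
    rw [conv, conv, ← integral_sub I1 I2]
    congr 1; funext u; simp [hh1]; ring
  -- reflected integrand
  set h2 : EuclideanSpace ℝ (Fin d) → ℝ := fun u => f (w - u) * (g (p - u) - g (q - u)) with hh2
  have hcomp : ∀ u, h1 (w - u) = h2 u := by
    intro u
    have e1 : g (q - (w - u)) = g (p - u) := by
      apply hgr.congr
      rw [hw]
      rw [show q - (p + q - u) = u - p by abel, norm_sub_rev]
    have e2 : g (p - (w - u)) = g (q - u) := by
      apply hgr.congr
      rw [hw]
      rw [show p - (p + q - u) = u - q by abel, norm_sub_rev]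
    simp only [hh1, hh2, e1, e2]
  have Ih2 : Integrable h2 := by
    have : Integrable (fun u => h1 (w - u)) := (integrable_comp_sub_left h1 w).2 Ih1
    exact this.congr (by filter_upwards with u; rw [hcomp u])
  have key2 : conv f g q - conv f g p = ∫ u, h2 u := by
    rw [key1, ← integral_sub_left_eq_self h1 volume w]
    congr 1; funext u; exact hcomp u
  have sum_nonpos : ∫ u, (h1 u + h2 u) ≤ 0 := by
    apply integral_nonpos
    intro u
    have := sign_lemma hfr hgr v ha hab u
    show h1 u + h2 u ≤ (0 : ℝ)
    simp only [hh1, hh2, hw, hq, hp]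
    nlinarith [this]
  have : 2 * (conv f g q - conv f g p) = ∫ u, (h1 u + h2 u) := by
    rw [integral_add Ih1 Ih2, ← key1, ← key2]; ring
  linarith [this ▸ sum_nonpos]

lemma conv_radial {f g : EuclideanSpace ℝ (Fin d) → ℝ}
    (hfr : RadDec f) (hgr : RadDec g)
    {x y : EuclideanSpace ℝ (Fin d)} (h : ‖x‖ = ‖y‖) :
    conv f g x = conv f g y := by
  set R := Submodule.reflection (ℝ ∙ (x - y))ᗮ with hR
  have hRx : R x = y := Submodule.reflection_sub h
  have hmp : MeasurePreserving R := R.measurePreserving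
  have hemb : MeasurableEmbedding R := R.toHomeomorph.measurableEmbedding
  calc conv f g x = ∫ z, f z * g (x - z) := rfl
    _ = ∫ z, f (R z) * g (R x - R z) := by
        congr 1; funext z
        rw [hfr.congr (R.norm_map z).symm]
        congr 1
        apply hgr.congr
        rw [← map_sub, R.norm_map]
    _ = ∫ u, f u * g (R x - u) := hmp.integral_comp hemb (fun u => f u * g (R x - u))
    _ = conv f g y := by rw [hRx]; rfl

lemma conv_raddec {f g : EuclideanSpace ℝ (Fin d) → ℝ}
    (hf : Integrable f) (hfr : RadDec f)
    (hgm : Measurable g) (hg0 : ∀ x, 0 ≤ g x) (hgr : RadDec g) :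
    RadDec (conv f g) := by
  intro x y hxy
  by_cases hx : x = 0
  · subst hx
    have := step_colinear hf hfr hgm hg0 hgr y (le_refl (0 : ℝ)) zero_le_one
    simpa using this
  · have hxn : 0 < ‖x‖ := norm_pos_iff.2 hx
    set b : ℝ := ‖y‖ / ‖x‖ with hb
    have hb1 : 1 ≤ b := (one_le_div hxn).2 hxy
    have hnorm : ‖b • x‖ = ‖y‖ := by
      rw [norm_smul, Real.norm_eq_abs, abs_of_nonneg (by positivity), hb,
        div_mul_cancel₀ _ hxn.ne']
    have h1 : conv f g y = conv f g (b • x) := conv_radial hfr hgr hnorm.symm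
    have h2 : conv f g (b • x) ≤ conv f g ((1 : ℝ) • x) :=
      step_colinear hf hfr hgm hg0 hgr x zero_le_one hb1
    rw [h1]
    simpa using h2

lemma conv_nonneg {f g : EuclideanSpace ℝ (Fin d) → ℝ}
    (hf0 : ∀ x, 0 ≤ f x) (hg0 : ∀ x, 0 ≤ g x) (x : EuclideanSpace ℝ (Fin d)) :
    0 ≤ conv f g x :=
  integral_nonneg fun u => mul_nonneg (hf0 u) (hg0 _)

end Aux

theorem convolution_power_radially_decreasing {d : ℕ} (hd : 1 ≤ d)
    (Q : EuclideanSpace ℝ (Fin d) → ℝ)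
    (hQ_int : Integrable Q) (hQ_nonneg : ∀ x, 0 ≤ Q x)
    (hQ_raddec : ∀ x y : EuclideanSpace ℝ (Fin d), ‖x‖ ≤ ‖y‖ → Q y ≤ Q x) :
    ∀ n : ℕ, 1 ≤ n →
      (∀ x y : EuclideanSpace ℝ (Fin d), ‖x‖ ≤ ‖y‖ → Cconv Q n y ≤ Cconv Q n x) ∧
      (∀ x : EuclideanSpace ℝ (Fin d), Cconv Q n (-x) = Cconv Q n x) := by
  have main : ∀ m : ℕ, RadDec (Cconv Q (m + 1)) ∧ (∀ x, 0 ≤ Cconv Q (m + 1) x) := by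
    intro m
    induction m with
    | zero => exact ⟨hQ_raddec, hQ_nonneg⟩
    | succ k ih =>
      have hQr : RadDec Q := hQ_raddec
      have hCc : Cconv Q (k + 2) = conv Q (Cconv Q (k + 1)) := rfl
      constructor
      · rw [hCc]
        exact conv_raddec hQ_int hQr (ih.1.measurable hd) ih.2 ih.1
      · rw [hCc]
        exact conv_nonneg hQ_nonneg ih.2
  intro n hn
  obtain ⟨m, rfl⟩ : ∃ m, n = m + 1 := ⟨n - 1, (Nat.succ_pred_eq_of_pos hn).symm⟩
  refine ⟨(main m).1, fun x => ?_⟩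
  exact (main m).1.congr (by simp)
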